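/- For an odd positive integer h and every real t ≠ 0, (sinh(t/2)/(t/2))^{-1}·(sinh(h t/2)/(h t/2)) = 1/h + ∑_{m=0}^∞ [ (1/(h·2^{2m-1}·(2m)!))·(∑_{l even, 2 ≤ l ≤ h-1} l^{2m}) ] · t^{2m}, where the inner sum runs over l = 2, 4, …, h-1. -/

import Mathlib

lemma sinh_mul_odd (k : ℕ) (t : ℝ) :
    Real.sinh ((2 * (k : ℝ) + 1) * t / 2) =
      Real.sinh (t / 2) * (1 + ∑ j ∈ Finset.range k, 2 * Real.cosh (((j : ℝ) + 1) * t)) := by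
  induction k with
  | zero => norm_num
  | succ k ih =>
    have e2 : (2 * (k : ℝ) + 1) * t / 2 = ((k : ℝ) + 1) * t - t / 2 := by ring
    rw [e2, Real.sinh_sub] at ih
    have e1 : (2 * ((k : ℕ) + 1 : ℝ) + 1) * t / 2 = ((k : ℝ) + 1) * t + t / 2 := by ring
    rw [show ((k + 1 : ℕ) : ℝ) = (k : ℝ) + 1 from by push_cast; ring, e1, Real.sinh_add,
      Finset.sum_range_succ]
    push_cast
    linear_combination ih

theorem sinh_ratio_odd_expansion (h : ℕ) (hpos : 0 < h) (hodd : Odd h)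
    (t : ℝ) (ht : t ≠ 0) :
    (Real.sinh (t / 2) / (t / 2))⁻¹ * (Real.sinh (h * t / 2) / (h * t / 2)) =
      1 / (h : ℝ) +
      ∑' m : ℕ, (1 / ((h : ℝ) * (2 : ℝ) ^ (2 * (m : ℤ) - 1) * (Nat.factorial (2 * m)))) *
        (∑ j ∈ Finset.range ((h - 1) / 2), ((2 * (j + 1) : ℕ) : ℝ) ^ (2 * m)) * t ^ (2 * m) := by
  obtain ⟨k, hk⟩ := hodd
  subst hk
  set H : ℝ := ((2 * k + 1 : ℕ) : ℝ) with hH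
  have hHval : H = 2 * (k : ℝ) + 1 := by rw [hH]; push_cast; ring
  have hHne : H ≠ 0 := by rw [hHval]; positivity
  have hs : Real.sinh (t / 2) ≠ 0 := by
    rw [Real.sinh_ne_zero]
    exact div_ne_zero ht two_ne_zero
  have hkk : (2 * k + 1 - 1) / 2 = k := by omega
  rw [hkk]
  -- rewrite the general term of the tsum
  have hterm : ∀ m : ℕ,
      (1 / (H * (2 : ℝ) ^ (2 * (m : ℤ) - 1) * (Nat.factorial (2 * m)))) *
        (∑ j ∈ Finset.range k, ((2 * (j + 1) : ℕ) : ℝ) ^ (2 * m)) * t ^ (2 * m) =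
      ∑ j ∈ Finset.range k, (2 / H) * ((((j : ℝ) + 1) * t) ^ (2 * m) / (Nat.factorial (2 * m))) := by
    intro m
    have h2 : (2 : ℝ) ^ (2 * (m : ℤ) - 1) = (2 : ℝ) ^ (2 * m) / 2 := by
      rw [zpow_sub₀ (by norm_num : (2 : ℝ) ≠ 0), zpow_one,
        show (2 * (m : ℤ)) = ((2 * m : ℕ) : ℤ) from by push_cast; ring, zpow_natCast]
    rw [h2, Finset.mul_sum, Finset.sum_mul]
    refine Finset.sum_congr rfl fun j _ => ?_
    have hfac : ((2 * m).factorial : ℝ) ≠ 0 := Nat.cast_ne_zero.mpr (Nat.factorial_ne_zero _)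
    have h2m : (2 : ℝ) ^ (2 * m) ≠ 0 := by positivity
    have e1 : ((2 * (j + 1) : ℕ) : ℝ) ^ (2 * m) = 2 ^ (2 * m) * ((j : ℝ) + 1) ^ (2 * m) := by
      push_cast; rw [← mul_pow]
    have e2 : (((j : ℝ) + 1) * t) ^ (2 * m) = ((j : ℝ) + 1) ^ (2 * m) * t ^ (2 * m) :=
      mul_pow _ _ _
    rw [e1, e2]
    field_simp
  rw [tsum_congr hterm]
  have hsummable : ∀ j ∈ Finset.range k, Summable
      (fun m : ℕ => (2 / H) * ((((j : ℝ) + 1) * t) ^ (2 * m) / (Nat.factorial (2 * m)))) :=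
    fun j _ => (Real.hasSum_cosh (((j : ℝ) + 1) * t)).summable.mul_left _
  rw [Summable.tsum_finsetSum hsummable]
  have hcosh : ∀ j : ℕ,
      ∑' m : ℕ, (2 / H) * ((((j : ℝ) + 1) * t) ^ (2 * m) / (Nat.factorial (2 * m))) =
        (2 / H) * Real.cosh (((j : ℝ) + 1) * t) := by
    intro j
    rw [tsum_mul_left, ← Real.cosh_eq_tsum]
  simp_rw [hcosh]
  -- now evaluate the left-hand side
  have hlhs : Real.sinh (H * t / 2) =
      Real.sinh (t / 2) * (1 + ∑ j ∈ Finset.range k, 2 * Real.cosh (((j : ℝ) + 1) * t)) := by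
    rw [hHval]; exact sinh_mul_odd k t
  rw [hlhs]
  have hsum' : ∑ x ∈ Finset.range k, 2 / H * Real.cosh (((x : ℝ) + 1) * t) =
      (∑ j ∈ Finset.range k, 2 * Real.cosh (((j : ℝ) + 1) * t)) / H := by
    rw [Finset.sum_div]
    exact Finset.sum_congr rfl fun j _ => by ring
  rw [hsum']
  field_simp
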